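/- arXiv:2006.02622 — 3 statements merged into one kernel-verified Lean document; each statement's English description precedes it below -/
import Mathlib

section
/- Let V_0 ⊂ ℝ^d be a finite set of nonzero vectors and let w_0, w_1, …, w_K ∈ ℝ^d be vectors with w_{k−1} ≠ w_k for every 1 ≤ k ≤ K. For 0 ≤ k ≤ K define V_k = V_0 ∪ { w_i − w_{i−1} : 1 ≤ i ≤ k }. Then the set { ξ ∈ ℝ^d : v · ξ > 0 for all v ∈ V_K } is nonempty if and only if cone(V_0) is pointed and for every k ∈ {1, …, K}, −(w_k − w_{k−1}) ∉ cone(V_{k−1}). -/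
open scoped BigOperators

/-- The conic hull of a set `V ⊆ ℝ^d`: all nonnegative (finite) linear combinations
of elements of `V`. -/
def conicHull {d : ℕ} (V : Set (Fin d → ℝ)) : Set (Fin d → ℝ) :=
  {x | ∃ (k : ℕ) (θ : Fin k → ℝ) (u : Fin k → Fin d → ℝ),
    (∀ i, 0 ≤ θ i) ∧ (∀ i, u i ∈ V) ∧ x = ∑ i, θ i • u i}

/-- A set `C ⊆ ℝ^d` is a pointed cone if it is a cone (closed under multiplication by
nonnegative scalars) which is closed, convex, and satisfies `C ∩ (-C) = {0}`. -/
def IsPointedCone {d : ℕ} (C : Set (Fin d → ℝ)) : Prop :=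
  (∀ v ∈ C, ∀ θ : ℝ, 0 ≤ θ → θ • v ∈ C) ∧ IsClosed C ∧ Convex ℝ C ∧ C ∩ (-C) = {0}

/-- The set `V_k = V_0 ∪ { w_i − w_{i−1} : 1 ≤ i ≤ k }`. -/
def stepSet {d : ℕ} (V0 : Set (Fin d → ℝ)) (w : ℕ → Fin d → ℝ) (k : ℕ) :
    Set (Fin d → ℝ) :=
  V0 ∪ {x | ∃ i, 1 ≤ i ∧ i ≤ k ∧ x = w i - w (i - 1)}

section Aux

variable {d : ℕ}

lemma aux_zero_mem (V : Set (Fin d → ℝ)) : (0 : Fin d → ℝ) ∈ conicHull V :=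
  ⟨0, Fin.elim0, Fin.elim0, fun i => i.elim0, fun i => i.elim0, by simp⟩

lemma aux_smul_mem {V : Set (Fin d → ℝ)} {x : Fin d → ℝ} (hx : x ∈ conicHull V)
    {c : ℝ} (hc : 0 ≤ c) : c • x ∈ conicHull V := by
  obtain ⟨k, θ, u, h1, h2, rfl⟩ := hx
  refine ⟨k, fun i => c * θ i, u, fun i => mul_nonneg hc (h1 i), h2, ?_⟩
  rw [Finset.smul_sum]
  simp [smul_smul]

lemma aux_single_mem {V : Set (Fin d → ℝ)} {v : Fin d → ℝ} (hv : v ∈ V) {c : ℝ}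
    (hc : 0 ≤ c) : c • v ∈ conicHull V :=
  ⟨1, fun _ => c, fun _ => v, fun _ => hc, fun _ => hv, by simp⟩

lemma aux_add_mem {V : Set (Fin d → ℝ)} {x y : Fin d → ℝ} (hx : x ∈ conicHull V)
    (hy : y ∈ conicHull V) : x + y ∈ conicHull V := by
  obtain ⟨k1, θ1, u1, h1, h2, rfl⟩ := hx
  obtain ⟨k2, θ2, u2, h3, h4, rfl⟩ := hy
  refine ⟨k1 + k2, Fin.append θ1 θ2, Fin.append u1 u2, ?_, ?_, ?_⟩
  · intro i
    refine Fin.addCases (fun i => ?_) (fun i => ?_) i <;>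
      simp [Fin.append_left, Fin.append_right, h1, h3]
  · intro i
    refine Fin.addCases (fun i => ?_) (fun i => ?_) i <;>
      simp [Fin.append_left, Fin.append_right, h2, h4]
  · rw [Fin.sum_univ_add]
    simp [Fin.append_left, Fin.append_right]

lemma aux_sum_mem {V : Set (Fin d → ℝ)} {ι : Type*} [DecidableEq ι] (s : Finset ι)
    (θ : ι → ℝ) (u : ι → Fin d → ℝ) (h1 : ∀ i ∈ s, 0 ≤ θ i) (h2 : ∀ i ∈ s, u i ∈ V) :
    ∑ i ∈ s, θ i • u i ∈ conicHull V := by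
  induction s using Finset.induction_on with
  | empty => simpa using aux_zero_mem V
  | @insert a s hni ih =>
    rw [Finset.sum_insert hni]
    exact aux_add_mem
      (aux_single_mem (h2 _ (Finset.mem_insert_self _ _)) (h1 _ (Finset.mem_insert_self _ _)))
      (ih (fun i hi => h1 i (Finset.mem_insert_of_mem hi))
        (fun i hi => h2 i (Finset.mem_insert_of_mem hi)))

lemma aux_conicHull_mono {V W : Set (Fin d → ℝ)} (h : V ⊆ W) :
    conicHull V ⊆ conicHull W := by
  rintro x ⟨k, θ, u, h1, h2, rfl⟩
  exact ⟨k, θ, u, h1, fun i => h (h2 i), rfl⟩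

lemma aux_dot_rep {k : ℕ} (θ : Fin k → ℝ) (u : Fin k → Fin d → ℝ) (ξ : Fin d → ℝ) :
    ∑ j, (∑ i, θ i • u i) j * ξ j = ∑ i, θ i * ∑ j, u i j * ξ j := by
  simp only [Finset.sum_apply, Pi.smul_apply, smul_eq_mul, Finset.sum_mul, Finset.mul_sum]
  rw [Finset.sum_comm]
  simp [mul_assoc]

lemma aux_dot_nonneg {V : Set (Fin d → ℝ)} {ξ : Fin d → ℝ}
    (hξ : ∀ v ∈ V, 0 < ∑ i, v i * ξ i) {x : Fin d → ℝ} (hx : x ∈ conicHull V) :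
    0 ≤ ∑ i, x i * ξ i := by
  obtain ⟨k, θ, u, h1, h2, rfl⟩ := hx
  rw [aux_dot_rep]
  exact Finset.sum_nonneg fun i _ => mul_nonneg (h1 i) (hξ _ (h2 i)).le

lemma aux_dot_neg (x ξ : Fin d → ℝ) :
    ∑ i, (-x) i * ξ i = -∑ i, x i * ξ i := by
  simp [neg_mul]

lemma aux_eq_zero {V : Set (Fin d → ℝ)} {ξ : Fin d → ℝ}
    (hξ : ∀ v ∈ V, 0 < ∑ i, v i * ξ i) {x : Fin d → ℝ} (hx : x ∈ conicHull V)
    (hnx : -x ∈ conicHull V) : x = 0 := by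
  have h1 := aux_dot_nonneg hξ hx
  have h2 := aux_dot_nonneg hξ hnx
  rw [aux_dot_neg] at h2
  have hd : ∑ i, x i * ξ i = 0 := le_antisymm (by linarith) h1
  obtain ⟨k, θ, u, hθ, hu, rfl⟩ := hx
  rw [aux_dot_rep] at hd
  have hz := (Finset.sum_eq_zero_iff_of_nonneg
    (fun i _ => mul_nonneg (hθ i) (hξ _ (hu i)).le)).1 hd
  refine Finset.sum_eq_zero fun i _ => ?_
  have hzi : θ i = 0 := by
    rcases mul_eq_zero.1 (hz i (Finset.mem_univ i)) with h | h
    · exact h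
    · exact absurd h (ne_of_gt (hξ _ (hu i)))
  simp [hzi]

lemma aux_mem_union_singleton {V : Set (Fin d → ℝ)} {u x : Fin d → ℝ} :
    x ∈ conicHull (V ∪ {u}) ↔ ∃ a : ℝ, 0 ≤ a ∧ ∃ p ∈ conicHull V, x = a • u + p := by
  classical
  constructor
  · rintro ⟨k, θ, f, h1, h2, rfl⟩
    refine ⟨∑ i ∈ Finset.univ.filter (fun i => f i = u), θ i,
      Finset.sum_nonneg (fun i _ => h1 i),
      ∑ i ∈ Finset.univ.filter (fun i => ¬ f i = u), θ i • f i, ?_, ?_⟩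
    · refine aux_sum_mem _ _ _ (fun i _ => h1 i) (fun i hi => ?_)
      rcases h2 i with h | h
      · exact h
      · exact absurd h (by simpa using (Finset.mem_filter.1 hi).2)
    · rw [Finset.sum_smul,
        ← Finset.sum_filter_add_sum_filter_not Finset.univ (fun i => f i = u)
          (fun i => θ i • f i)]
      congr 1
      exact Finset.sum_congr rfl fun i hi => by rw [(Finset.mem_filter.1 hi).2]
  · rintro ⟨a, ha, p, hp, rfl⟩
    exact aux_add_mem
      (aux_single_mem (Set.mem_union_right V (Set.mem_singleton u)) ha)
      (aux_conicHull_mono Set.subset_union_left hp)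

lemma aux_step {V : Set (Fin d → ℝ)} {u : Fin d → ℝ}
    (hV : ∀ x ∈ conicHull V, -x ∈ conicHull V → x = 0) (hu : -u ∉ conicHull V) :
    ∀ x ∈ conicHull (V ∪ {u}), -x ∈ conicHull (V ∪ {u}) → x = 0 := by
  intro x hx hnx
  obtain ⟨a, ha, p, hp, rfl⟩ := aux_mem_union_singleton.1 hx
  obtain ⟨b, hb, q, hq, hbq⟩ := aux_mem_union_singleton.1 hnx
  have h0 : a • u + p + (b • u + q) = 0 := by
    rw [← hbq]; abel
  have hsum : (a + b) • u + (p + q) = 0 := by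
    rw [add_smul, ← h0]; abel
  rcases eq_or_lt_of_le (by positivity : (0:ℝ) ≤ a + b) with hab | hab
  · have ha0 : a = 0 := by linarith
    have hb0 : b = 0 := by linarith
    have hxp : a • u + p = p := by simp [ha0]
    rw [hxp]
    apply hV p hp
    have hpq : -p = q := by
      rw [← hxp, hbq, hb0]; simp
    rw [hpq]; exact hq
  · exfalso; apply hu
    have h2 : (a + b) • u = -(p + q) := eq_neg_of_add_eq_zero_left hsum
    have h3 : u = (a + b)⁻¹ • (-(p + q)) := by
      rw [← h2, inv_smul_smul₀ (ne_of_gt hab)]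
    have h4 : -u = (a + b)⁻¹ • (p + q) := by
      rw [h3, smul_neg, neg_neg]
    rw [h4]
    exact aux_smul_mem (aux_add_mem hp hq) (by positivity)

lemma aux_conicHull_eq (V : Set (Fin d → ℝ)) (hV : V.Finite) :
    ∃ (n : ℕ) (f : Fin n → Fin d → ℝ), (∀ i, f i ∈ V) ∧
      conicHull V = {x | ∃ θ : Fin n → ℝ, (∀ i, 0 ≤ θ i) ∧ x = ∑ i, θ i • f i} := by
  classical
  haveI := hV.fintype
  set e := Fintype.equivFin V with he
  refine ⟨Fintype.card V, fun i => ((e.symm i : V) : Fin d → ℝ),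
    fun i => (e.symm i).2, ?_⟩
  ext x
  constructor
  · rintro ⟨k, θ, u, h1, h2, rfl⟩
    set g : Fin k → Fin (Fintype.card V) := fun i => e ⟨u i, h2 i⟩ with hg
    have hfg : ∀ i, ((e.symm (g i) : V) : Fin d → ℝ) = u i := by
      intro i; rw [hg]; simp
    refine ⟨fun j => ∑ i ∈ Finset.univ.filter (fun i => g i = j), θ i,
      fun j => Finset.sum_nonneg fun i _ => h1 i, ?_⟩
    have : ∀ j : Fin (Fintype.card V),
        (∑ i ∈ Finset.univ.filter (fun i => g i = j), θ i) • ((e.symm j : V) : Fin d → ℝ)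
        = ∑ i ∈ Finset.univ.filter (fun i => g i = j), θ i • u i := by
      intro j
      rw [Finset.sum_smul]
      refine Finset.sum_congr rfl fun i hi => ?_
      rw [← hfg i, (Finset.mem_filter.1 hi).2]
    rw [Finset.sum_congr rfl (fun j _ => this j), Finset.sum_fiberwise]
  · rintro ⟨θ, h1, rfl⟩
    exact ⟨Fintype.card V, θ, _, h1, fun i => (e.symm i).2, rfl⟩

lemma aux_isClosed_rep {n : ℕ} (f : Fin n → Fin d → ℝ) (ξ : Fin d → ℝ)
    (hf : ∀ i, 0 < ∑ j, f i j * ξ j) :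
    IsClosed {x : Fin d → ℝ | ∃ θ : Fin n → ℝ, (∀ i, 0 ≤ θ i) ∧ x = ∑ i, θ i • f i} := by
  apply IsSeqClosed.isClosed
  intro x p hx hp
  choose θ hθ hxθ using hx
  have hdotc : Continuous fun y : Fin d → ℝ => ∑ j, y j * ξ j :=
    continuous_finset_sum _ fun j _ => (continuous_apply j).mul continuous_const
  obtain ⟨M, hM⟩ := ((hdotc.tendsto p).comp hp).bddAbove_range
  have hbound : ∀ m i, θ m i ∈ Set.Icc (0:ℝ) (M / (∑ j, f i j * ξ j)) := by
    intro m i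
    refine ⟨hθ m i, ?_⟩
    have hdm : ∑ j, x m j * ξ j ≤ M := hM ⟨m, rfl⟩
    have hrep : ∑ j, x m j * ξ j = ∑ i', θ m i' * ∑ j, f i' j * ξ j := by
      rw [hxθ m, aux_dot_rep]
    have hterm : θ m i * (∑ j, f i j * ξ j) ≤ ∑ j, x m j * ξ j := by
      rw [hrep]
      exact Finset.single_le_sum
        (fun i' _ => mul_nonneg (hθ m i') (hf i').le) (Finset.mem_univ i)
    rw [le_div_iff₀ (hf i)]
    linarith
  have hcomp : IsCompact (Set.univ.pi fun i : Fin n =>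
      Set.Icc (0:ℝ) (M / (∑ j, f i j * ξ j))) :=
    isCompact_univ_pi fun i => isCompact_Icc
  obtain ⟨Θ, hΘ, φ, hφ, hφt⟩ := hcomp.tendsto_subseq
    (x := θ) (fun m => by rw [Set.mem_univ_pi]; exact fun i => hbound m i)
  have hT : Continuous fun t : Fin n → ℝ => ∑ i, t i • f i :=
    continuous_finset_sum _ fun i _ => (continuous_apply i).smul continuous_const
  have h1 : Filter.Tendsto (fun m => ∑ i, θ (φ m) i • f i) Filter.atTop
      (nhds (∑ i, Θ i • f i)) := (hT.tendsto Θ).comp hφt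
  have h2 : Filter.Tendsto (fun m => ∑ i, θ (φ m) i • f i) Filter.atTop (nhds p) :=
    (hp.comp hφ.tendsto_atTop).congr fun m => hxθ (φ m)
  exact ⟨Θ, fun i => (hΘ i (Set.mem_univ i)).1, tendsto_nhds_unique h2 h1⟩

lemma aux_isClosed {V : Set (Fin d → ℝ)} (hV : V.Finite) {ξ : Fin d → ℝ}
    (hξ : ∀ v ∈ V, 0 < ∑ i, v i * ξ i) : IsClosed (conicHull V) := by
  obtain ⟨n, f, hfV, hEq⟩ := aux_conicHull_eq V hV
  rw [hEq]
  exact aux_isClosed_rep f ξ fun i => hξ _ (hfV i)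

lemma aux_pointed_of_pos {V : Set (Fin d → ℝ)} (hV : V.Finite) {ξ : Fin d → ℝ}
    (hξ : ∀ v ∈ V, 0 < ∑ i, v i * ξ i) : IsPointedCone (conicHull V) := by
  refine ⟨fun v hv c hc => aux_smul_mem hv hc, aux_isClosed hV hξ, ?_, ?_⟩
  · intro a ha b hb c d' hc hd _
    exact aux_add_mem (aux_smul_mem ha hc) (aux_smul_mem hb hd)
  · ext x
    simp only [Set.mem_inter_iff, Set.mem_neg, Set.mem_singleton_iff]
    constructor
    · rintro ⟨h1, h2⟩; exact aux_eq_zero hξ h1 h2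
    · rintro rfl
      exact ⟨aux_zero_mem V, by simpa using aux_zero_mem V⟩

lemma aux_zero_not_mem_convexHull {V : Set (Fin d → ℝ)} (hV : V.Finite)
    (h0 : ∀ v ∈ V, v ≠ 0) (hpt : ∀ x ∈ conicHull V, -x ∈ conicHull V → x = 0) :
    (0 : Fin d → ℝ) ∉ convexHull ℝ V := by
  classical
  intro hmem
  rw [hV.convexHull_eq] at hmem
  obtain ⟨c, hc0, hc1, hcx⟩ := hmem
  have hx : ∑ y ∈ hV.toFinset, c y • y = 0 := by
    rw [← hcx, Finset.centerMass_eq_of_sum_1 _ _ hc1]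
    simp
  obtain ⟨y0, hy0t, hy0⟩ : ∃ y ∈ hV.toFinset, 0 < c y := by
    by_contra h
    push_neg at h
    have h1 : (1:ℝ) = 0 := by
      rw [← hc1]
      exact Finset.sum_eq_zero fun y hy =>
        le_antisymm (h y hy) (hc0 y (hV.mem_toFinset.1 hy))
    norm_num at h1
  have hsplit : c y0 • y0 + ∑ y ∈ hV.toFinset.erase y0, c y • y = 0 := by
    rw [Finset.add_sum_erase _ (fun y => c y • y) hy0t]
    exact hx
  have hmem1 : c y0 • y0 ∈ conicHull V :=
    aux_single_mem (hV.mem_toFinset.1 hy0t) hy0.le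
  have hmem2 : -(c y0 • y0) ∈ conicHull V := by
    have hneg : -(c y0 • y0) = ∑ y ∈ hV.toFinset.erase y0, c y • y :=
      by rw [neg_eq_iff_add_eq_zero]; exact hsplit
    rw [hneg]
    exact aux_sum_mem _ _ _
      (fun y hy => hc0 y (hV.mem_toFinset.1 (Finset.mem_of_mem_erase hy)))
      (fun y hy => hV.mem_toFinset.1 (Finset.mem_of_mem_erase hy))
  have hz := hpt _ hmem1 hmem2
  rcases smul_eq_zero.1 hz with h | h
  · exact absurd h (ne_of_gt hy0)
  · exact h0 y0 (hV.mem_toFinset.1 hy0t) h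

lemma aux_exists_pos_functional {V : Set (Fin d → ℝ)} (hV : V.Finite)
    (h0 : ∀ v ∈ V, v ≠ 0) (hpt : ∀ x ∈ conicHull V, -x ∈ conicHull V → x = 0) :
    ∃ ξ : Fin d → ℝ, ∀ v ∈ V, 0 < ∑ i, v i * ξ i := by
  have hno := aux_zero_not_mem_convexHull hV h0 hpt
  obtain ⟨f, u, hfu, hall⟩ := geometric_hahn_banach_point_closed
    (convex_convexHull ℝ V) ((hV.isCompact_convexHull (𝕜 := ℝ)).isClosed) hno
  refine ⟨fun i => f (fun j => if i = j then (1:ℝ) else 0), fun v hv => ?_⟩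
  have hfv : f v = ∑ i, v i * f (fun j => if i = j then (1:ℝ) else 0) := by
    conv_lhs => rw [pi_eq_sum_univ v]
    rw [map_sum]
    simp [smul_eq_mul]
  have h1 : (0:ℝ) < u := by simpa using hfu
  have h2 : u < f v := hall v (subset_convexHull ℝ V hv)
  have : 0 < f v := lt_trans h1 h2
  rw [hfv] at this
  simpa using this

lemma stepSet_zero {V0 : Set (Fin d → ℝ)} {w : ℕ → Fin d → ℝ} :
    stepSet V0 w 0 = V0 := by
  ext x
  constructor
  · rintro (h | ⟨i, h1, h2, _⟩)
    · exact h
    · omega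
  · exact Or.inl

lemma stepSet_succ {V0 : Set (Fin d → ℝ)} {w : ℕ → Fin d → ℝ} (k : ℕ) :
    stepSet V0 w (k + 1) = stepSet V0 w k ∪ {w (k + 1) - w k} := by
  ext x
  constructor
  · rintro (h | ⟨i, h1, h2, rfl⟩)
    · exact Or.inl (Or.inl h)
    · rcases Nat.lt_or_ge i (k + 1) with h' | h'
      · exact Or.inl (Or.inr ⟨i, h1, by omega, rfl⟩)
      · have hik : i = k + 1 := by omega
        subst hik
        right; simp
  · rintro ((h | ⟨i, h1, h2, rfl⟩) | h)
    · exact Or.inl h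
    · exact Or.inr ⟨i, h1, by omega, rfl⟩
    · rw [Set.mem_singleton_iff] at h
      subst h
      exact Or.inr ⟨k + 1, by omega, le_refl _, by simp⟩

lemma stepSet_mono {V0 : Set (Fin d → ℝ)} {w : ℕ → Fin d → ℝ} {k l : ℕ}
    (h : k ≤ l) : stepSet V0 w k ⊆ stepSet V0 w l := by
  rintro x (h' | ⟨i, h1, h2, rfl⟩)
  · exact Or.inl h'
  · exact Or.inr ⟨i, h1, le_trans h2 h, rfl⟩

lemma stepSet_finite {V0 : Set (Fin d → ℝ)} {w : ℕ → Fin d → ℝ}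
    (hV0 : V0.Finite) (K : ℕ) : (stepSet V0 w K).Finite :=
  hV0.union (((Set.finite_Icc 1 K).image (fun i => w i - w (i - 1))).subset
    (by rintro x ⟨i, h1, h2, rfl⟩; exact ⟨i, Set.mem_Icc.2 ⟨h1, h2⟩, rfl⟩))

end Aux

/-- correctness of the recursive LC-LEP solver. With
`V_k = V_0 ∪ { w_i − w_{i−1} : 1 ≤ i ≤ k }`, the set
`{ξ : v · ξ > 0 for all v ∈ V_K}` is nonempty iff `cone(V_0)` is pointed and for every
`1 ≤ k ≤ K`, `−(w_k − w_{k−1}) ∉ cone(V_{k−1})`. -/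
theorem lclep_solver_correct {d : ℕ} (K : ℕ) (V0 : Set (Fin d → ℝ))
    (hV0 : V0.Finite) (h0 : ∀ v ∈ V0, v ≠ 0) (w : ℕ → Fin d → ℝ)
    (hw : ∀ k, 1 ≤ k → k ≤ K → w (k - 1) ≠ w k) :
    {ξ : Fin d → ℝ | ∀ v ∈ stepSet V0 w K, 0 < ∑ i, v i * ξ i}.Nonempty ↔
      (IsPointedCone (conicHull V0) ∧
        ∀ k, 1 ≤ k → k ≤ K →
          -(w k - w (k - 1)) ∉ conicHull (stepSet V0 w (k - 1))) := by
  constructor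
  · rintro ⟨ξ, hξ⟩
    simp only [Set.mem_setOf_eq] at hξ
    have hξ0 : ∀ v ∈ V0, 0 < ∑ i, v i * ξ i := fun v hv => hξ v (Or.inl hv)
    refine ⟨aux_pointed_of_pos hV0 hξ0, ?_⟩
    intro k hk1 hkK hmem
    have hsub : stepSet V0 w (k - 1) ⊆ stepSet V0 w K := stepSet_mono (by omega)
    have h1 : 0 ≤ ∑ i, (-(w k - w (k - 1))) i * ξ i :=
      aux_dot_nonneg (fun v hv => hξ v (hsub hv)) hmem
    rw [aux_dot_neg] at h1
    have h2 : 0 < ∑ i, (w k - w (k - 1)) i * ξ i := hξ _ (Or.inr ⟨k, hk1, hkK, rfl⟩)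
    linarith
  · rintro ⟨⟨hcone, hclosed, hconv, hint⟩, hcond⟩
    have key : ∀ k, k ≤ K →
        ∀ x ∈ conicHull (stepSet V0 w k), -x ∈ conicHull (stepSet V0 w k) → x = 0 := by
      intro k
      induction k with
      | zero =>
        intro _ x hx hnx
        rw [stepSet_zero] at hx hnx
        have hmem : x ∈ conicHull V0 ∩ (-(conicHull V0)) := ⟨hx, Set.mem_neg.2 hnx⟩
        rw [hint] at hmem
        exact hmem
      | succ k ih =>
        intro hk
        rw [stepSet_succ]
        refine aux_step (ih (by omega)) ?_
        have hc := hcond (k + 1) (by omega) hk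
        simpa using hc
    have hall0 : ∀ v ∈ stepSet V0 w K, v ≠ 0 := by
      rintro v (hv | ⟨i, h1, h2, rfl⟩)
      · exact h0 v hv
      · exact sub_ne_zero.2 (Ne.symm (hw i h1 h2))
    obtain ⟨ξ, hξ⟩ := aux_exists_pos_functional (stepSet_finite hV0 K) hall0 (key K le_rfl)
    exact ⟨ξ, hξ⟩
end

section
/- Fix n ≥ 2 and the interaction type (2,1,…,1), i.e., the partition of {1,…,n} with I_1 = {1,2} and remaining blocks the singletons {3}, …, {n}. Let E be the set of Boolean functions on {1,…,n} and let σ : {0,…,2^n−1} → E be a bijection which is a linear extension of ≺_B (i.e., α ≺_B β implies σ^{-1}(α) < σ^{-1}(β)). Then the following are equivalent: (1) there exist positive reals ℓ_1,…,ℓ_n, δ_1,…,δ_n such that p_{σ(0)}(ℓ,δ) < p_{σ(1)}(ℓ,δ) < ⋯ < p_{σ(2^n−1)}(ℓ,δ); (2) there exist real numbers x_{1,(a,b)} for (a,b) ∈ {0,1}^2 and x_{k,c} for 3 ≤ k ≤ n, c ∈ {0,1}, satisfying −x_{1,(0,0)} + x_{1,(0,1)} + x_{1,(1,0)} − x_{1,(1,1)}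 > 0 and p'_{σ(0)}(x) < p'_{σ(1)}(x) < ⋯ < p'_{σ(2^n−1)}(x). -/
open scoped BigOperators

/-- for interaction type `(2,1,…,1)` (blocks `{1,2}, {3}, …, {n}`), a
linear extension `σ` of the Boolean lattice order is realizable by the PSD polynomials
over positive parameters iff it is realizable by the linearized PSD polynomials subject
to the additional constraint `−x_{1,(0,0)} + x_{1,(0,1)} + x_{1,(1,0)} − x_{1,(1,1)} > 0`. -/
theorem psd_type_two_one_characterization (n : ℕ) (hn : 2 ≤ n)
    (σ : Fin (2 ^ n) ≃ (Fin n → Bool))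
    (hext : ∀ i j : Fin (2 ^ n), (∀ k, σ i k ≤ σ j k) → σ i ≠ σ j → i < j) :
    (∃ ℓ δ : Fin n → ℝ, (∀ k, 0 < ℓ k) ∧ (∀ k, 0 < δ k) ∧
      StrictMono (fun i : Fin (2 ^ n) =>
        (ℓ ⟨0, by omega⟩ + (if σ i ⟨0, by omega⟩ then δ ⟨0, by omega⟩ else 0)
          + ℓ ⟨1, by omega⟩ + (if σ i ⟨1, by omega⟩ then δ ⟨1, by omega⟩ else 0)) *
        ∏ k ∈ Finset.univ.filter (fun k : Fin n => 2 ≤ (k : ℕ)),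
          (ℓ k + (if σ i k then δ k else 0)))) ↔
    (∃ (x1 : Bool → Bool → ℝ) (x : Fin n → Bool → ℝ),
      0 < -(x1 false false) + x1 false true + x1 true false - x1 true true ∧
      StrictMono (fun i : Fin (2 ^ n) =>
        x1 (σ i ⟨0, by omega⟩) (σ i ⟨1, by omega⟩) +
        ∑ k ∈ Finset.univ.filter (fun k : Fin n => 2 ≤ (k : ℕ)), x k (σ i k))) := by
  have h0n : 0 < n := by omega
  have h1n : 1 < n := by omega
  set i0 : Fin n := ⟨0, by omega⟩ with hi0
  set i1 : Fin n := ⟨1, by omega⟩ with hi1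
  have hi01 : i0 ≠ i1 := by
    simp [hi0, hi1, Fin.ext_iff]
  set F : Finset (Fin n) := Finset.univ.filter (fun k : Fin n => 2 ≤ (k : ℕ)) with hF
  constructor
  · rintro ⟨ℓ, δ, hℓ, hδ, hmono⟩
    have hite : ∀ (c : Bool) (k : Fin n), (0:ℝ) ≤ (if c = true then δ k else 0) := by
      intro c k; cases c <;> simp [(hδ k).le]
    refine ⟨fun a b => Real.log (ℓ i0 + (if a then δ i0 else 0) + ℓ i1 + (if b then δ i1 else 0)),
      fun k c => Real.log (ℓ k + if c then δ k else 0), ?_, ?_⟩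
    · have h1 : (ℓ i0 + ℓ i1) * (ℓ i0 + δ i0 + ℓ i1 + δ i1)
          < (ℓ i0 + ℓ i1 + δ i1) * (ℓ i0 + δ i0 + ℓ i1) := by
        nlinarith [mul_pos (hδ i0) (hδ i1), hℓ i0, hℓ i1]
      have hp1 : (0:ℝ) < ℓ i0 + ℓ i1 := by nlinarith [hℓ i0, hℓ i1]
      have hp2 : (0:ℝ) < ℓ i0 + δ i0 + ℓ i1 + δ i1 := by nlinarith [hℓ i0, hℓ i1, hδ i0, hδ i1]
      have hp3 : (0:ℝ) < ℓ i0 + ℓ i1 + δ i1 := by nlinarith [hℓ i0, hℓ i1, hδ i1]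
      have hp4 : (0:ℝ) < ℓ i0 + δ i0 + ℓ i1 := by nlinarith [hℓ i0, hℓ i1, hδ i0]
      have hlt := Real.log_lt_log (mul_pos hp1 hp2) h1
      rw [Real.log_mul (ne_of_gt hp1) (ne_of_gt hp2),
        Real.log_mul (ne_of_gt hp3) (ne_of_gt hp4)] at hlt
      norm_num
      linarith
    · intro i j hij
      have hA : ∀ m : Fin (2 ^ n),
          (0:ℝ) < ℓ i0 + (if σ m i0 then δ i0 else 0) + ℓ i1 + (if σ m i1 then δ i1 else 0) := by
        intro m
        nlinarith [hite (σ m i0) i0, hite (σ m i1) i1, hℓ i0, hℓ i1]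
      have hfac : ∀ m : Fin (2 ^ n), ∀ k ∈ F, (0:ℝ) < ℓ k + if σ m k then δ k else 0 := by
        intro m k _
        nlinarith [hite (σ m k) k, hℓ k]
      have hprod : ∀ m : Fin (2 ^ n), (0:ℝ) < ∏ k ∈ F, (ℓ k + if σ m k then δ k else 0) :=
        fun m => Finset.prod_pos (hfac m)
      have key : ∀ m : Fin (2 ^ n),
          Real.log (ℓ i0 + (if σ m i0 then δ i0 else 0) + ℓ i1 + (if σ m i1 then δ i1 else 0)) +
            ∑ k ∈ F, Real.log (ℓ k + if σ m k then δ k else 0)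
          = Real.log ((ℓ i0 + (if σ m i0 then δ i0 else 0) + ℓ i1 + (if σ m i1 then δ i1 else 0)) *
              ∏ k ∈ F, (ℓ k + if σ m k then δ k else 0)) := by
        intro m
        rw [Real.log_mul (ne_of_gt (hA m)) (ne_of_gt (hprod m)),
          Real.log_prod (fun k hk => ne_of_gt (hfac m k hk))]
      simp only []
      rw [key i, key j]
      exact Real.log_lt_log (mul_pos (hA i) (hprod i)) (hmono hij)
  · rintro ⟨x1, x, hcon, hmono⟩
    -- sum function
    set S : (Fin n → Bool) → ℝ := fun γ => x1 (γ i0) (γ i1) + ∑ k ∈ F, x k (γ k) with hS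
    have key : ∀ α β : Fin n → Bool, (∀ k, α k ≤ β k) → α ≠ β → S α < S β := by
      intro α β hle hne
      have hlt := hext (σ.symm α) (σ.symm β)
        (by simpa using hle) (by simpa using hne)
      have := hmono hlt
      simpa [hS, Equiv.apply_symm_apply] using this
    -- coordinate monotonicity facts
    have hsum_ind : ∀ k0 : Fin n, k0 ∉ F →
        ∑ k ∈ F, x k (decide (k = k0)) = ∑ k ∈ F, x k false := by
      intro k0 hk0
      apply Finset.sum_congr rfl
      intro k hk
      have : k ≠ k0 := fun h => hk0 (h ▸ hk)
      simp [this]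
    have hi0F : i0 ∉ F := by simp [hF, hi0]
    have hi1F : i1 ∉ F := by simp [hF, hi1]
    have h00_10 : x1 false false < x1 true false := by
      have h := key (fun _ => false) (fun m => decide (m = i0))
        (fun k => by simp) (by
          intro h
          have := congrFun h i0
          simp at this)
      simp only [hS] at h
      rw [hsum_ind i0 hi0F] at h
      simp only [Ne.symm hi01, decide_true, decide_false, decide_eq_false_iff_not,
        eq_self_iff_true] at h
      simp [Ne.symm hi01] at h
      linarith
    have h00_01 : x1 false false < x1 false true := by
      have h := key (fun _ => false) (fun m => decide (m = i1))
        (fun k => by simp) (by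
          intro h
          have := congrFun h i1
          simp at this)
      simp only [hS] at h
      rw [hsum_ind i1 hi1F] at h
      simp [hi01] at h
      linarith
    have h10_11 : x1 true false < x1 true true := by
      have h := key (fun m => decide (m = i0)) (fun m => decide ((m : ℕ) < 2))
        (fun k => by
          by_cases hk : k = i0
          · simp [hk, hi0]
          · simp [hk])
        (by
          intro h
          have := congrFun h i1
          simp [hi01.symm, hi1] at this
          exact hi01 (this.symm.trans hi1.symm))
      simp only [hS] at h
      rw [hsum_ind i0 hi0F] at h
      have hsum2 : ∑ k ∈ F, x k (decide ((k : ℕ) < 2)) = ∑ k ∈ F, x k false := by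
        apply Finset.sum_congr rfl
        intro k hk
        have : 2 ≤ (k : ℕ) := by simpa [hF] using hk
        have : ¬ ((k : ℕ) < 2) := by omega
        simp [this]
      rw [hsum2] at h
      have v0 : (i0 : ℕ) = 0 := rfl
      have v1 : (i1 : ℕ) = 1 := rfl
      simp [Ne.symm hi01, v0, v1] at h
      linarith
    have h01_11 : x1 false true < x1 true true := by
      have h := key (fun m => decide (m = i1)) (fun m => decide ((m : ℕ) < 2))
        (fun k => by
          by_cases hk : k = i1
          · simp [hk, hi1]
          · simp [hk])
        (by
          intro h
          have := congrFun h i0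
          simp [hi01, hi0] at this
          exact hi01 (hi0.trans this))
      simp only [hS] at h
      rw [hsum_ind i1 hi1F] at h
      have hsum2 : ∑ k ∈ F, x k (decide ((k : ℕ) < 2)) = ∑ k ∈ F, x k false := by
        apply Finset.sum_congr rfl
        intro k hk
        have : 2 ≤ (k : ℕ) := by simpa [hF] using hk
        have : ¬ ((k : ℕ) < 2) := by omega
        simp [this]
      rw [hsum2] at h
      have v0 : (i0 : ℕ) = 0 := rfl
      have v1 : (i1 : ℕ) = 1 := rfl
      simp [hi01, v0, v1] at h
      linarith
    have hxk : ∀ k0 ∈ F, x k0 false < x k0 true := by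
      intro k0 hk0
      have h := key (fun _ => false) (fun m => decide (m = k0))
        (fun k => by simp) (by
          intro h
          have := congrFun h k0
          simp at this)
      simp only [hS] at h
      have hk2 : 2 ≤ (k0 : ℕ) := by simpa [hF] using hk0
      have e0 : decide (i0 = k0) = false := by
        simp [Fin.ext_iff, hi0]; omega
      have e1 : decide (i1 = k0) = false := by
        simp [Fin.ext_iff, hi1]; omega
      rw [e0, e1] at h
      have hsplit1 : ∑ k ∈ F, x k (decide (k = k0)) =
          ∑ k ∈ F.erase k0, x k false + x k0 true := by
        rw [← Finset.sum_erase_add F _ hk0]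
        congr 1
        · apply Finset.sum_congr rfl
          intro k hk
          have := Finset.ne_of_mem_erase hk
          simp [this]
        · simp
      have hsplit2 : ∑ k ∈ F, x k false =
          ∑ k ∈ F.erase k0, x k false + x k0 false := by
        rw [← Finset.sum_erase_add F _ hk0]
      rw [hsplit1, hsplit2] at h
      linarith
    -- the four corner values
    set y00 := x1 false false
    set y01 := x1 false true
    set y10 := x1 true false
    set y11 := x1 true true
    -- IVT to find M with exp(M*y01)+exp(M*y10)-exp(M*y00) = exp(M*y11)
    set h : ℝ → ℝ := fun M =>
      Real.exp (M * y01) + Real.exp (M * y10) - Real.exp (M * y00) - Real.exp (M * y11) with hh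
    have hd : HasDerivAt h (-y00 + y01 + y10 - y11) 0 := by
      have d : ∀ c : ℝ, HasDerivAt (fun M : ℝ => Real.exp (M * c)) c 0 := by
        intro c
        have := (((hasDerivAt_id (0:ℝ)).mul_const c).exp)
        simpa using this
      have := (((d y01).add (d y10)).sub (d y00)).sub (d y11)
      exact this.congr_deriv (by ring)
    have hε : (0:ℝ) < -y00 + y01 + y10 - y11 := hcon
    rw [hasDerivAt_iff_tendsto_slope] at hd
    have hev : ∀ᶠ M in nhdsWithin (0:ℝ) (Set.Ioi 0), 0 < slope h 0 M := by
      have h1 : ∀ᶠ M in nhdsWithin (0:ℝ) {(0:ℝ)}ᶜ, 0 < slope h 0 M :=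
        hd.eventually (eventually_gt_nhds hε)
      exact h1.filter_mono (nhdsWithin_mono _ (fun z hz => ne_of_gt hz))
    have hev2 : ∀ᶠ M in nhdsWithin (0:ℝ) (Set.Ioi 0), 0 < M :=
      eventually_mem_nhdsWithin.mono (fun z hz => hz)
    obtain ⟨M₀, hsl, hM₀⟩ := (hev.and hev2).exists
    have hh0 : h 0 = 0 := by simp [hh]
    have hhM₀ : 0 < h M₀ := by
      rw [slope_def_field, hh0, sub_zero, sub_zero] at hsl
      rcases div_pos_iff.1 hsl with ⟨ha, _⟩ | ⟨_, hb⟩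
      · exact ha
      · linarith
    -- large M endpoint
    set c : ℝ := max y01 y10 with hc
    have hc11 : c < y11 := max_lt h01_11 h10_11
    set M₁ : ℝ := max M₀ ((Real.log 2 + 1) / (y11 - c)) with hM₁
    have hM₀₁ : M₀ ≤ M₁ := le_max_left _ _
    have hM₁pos : 0 < M₁ := lt_of_lt_of_le hM₀ hM₀₁
    have hhM₁ : h M₁ < 0 := by
      have hlog : Real.log 2 < M₁ * (y11 - c) := by
        have h2 : (Real.log 2 + 1) / (y11 - c) ≤ M₁ := le_max_right _ _
        have h3 : ((Real.log 2 + 1) / (y11 - c)) * (y11 - c) ≤ M₁ * (y11 - c) :=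
          mul_le_mul_of_nonneg_right h2 (by linarith)
        rw [div_mul_cancel₀ _ (by linarith : y11 - c ≠ 0)] at h3
        linarith
      have hexp : 2 * Real.exp (M₁ * c) < Real.exp (M₁ * y11) := by
        have : Real.exp (Real.log 2) < Real.exp (M₁ * (y11 - c)) := Real.exp_lt_exp.2 hlog
        rw [Real.exp_log (by norm_num : (0:ℝ) < 2)] at this
        have h4 : Real.exp (M₁ * y11) = Real.exp (M₁ * c) * Real.exp (M₁ * (y11 - c)) := by
          rw [← Real.exp_add]; ring_nf
        rw [h4]
        nlinarith [Real.exp_pos (M₁ * c)]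
      have h01 : Real.exp (M₁ * y01) ≤ Real.exp (M₁ * c) :=
        Real.exp_le_exp.2 (mul_le_mul_of_nonneg_left (le_max_left _ _) (le_of_lt hM₁pos))
      have h10 : Real.exp (M₁ * y10) ≤ Real.exp (M₁ * c) :=
        Real.exp_le_exp.2 (mul_le_mul_of_nonneg_left (le_max_right _ _) (le_of_lt hM₁pos))
      have := Real.exp_pos (M₁ * y00)
      simp only [hh]
      linarith
    have hcont : ContinuousOn h (Set.Icc M₀ M₁) := by
      apply Continuous.continuousOn
      fun_prop
    obtain ⟨M, hMmem, hM0⟩ := intermediate_value_Icc' hM₀₁ hcont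
      ⟨le_of_lt hhM₁, le_of_lt hhM₀⟩
    have hMpos : 0 < M := lt_of_lt_of_le hM₀ hMmem.1
    -- construction
    refine ⟨fun k => if (k : ℕ) = 0 ∨ (k : ℕ) = 1 then Real.exp (M * y00) / 2
        else Real.exp (M * x k false),
      fun k => if (k : ℕ) = 0 then Real.exp (M * y10) - Real.exp (M * y00)
        else if (k : ℕ) = 1 then Real.exp (M * y01) - Real.exp (M * y00)
        else Real.exp (M * x k true) - Real.exp (M * x k false), ?_, ?_, ?_⟩
    · intro k
      simp only []
      split
      · positivity
      · positivity
    · intro k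
      simp only []
      by_cases hk0 : (k : ℕ) = 0
      · rw [if_pos hk0]
        exact sub_pos.2 (Real.exp_lt_exp.2 (mul_lt_mul_of_pos_left h00_10 hMpos))
      · rw [if_neg hk0]
        by_cases hk1 : (k : ℕ) = 1
        · rw [if_pos hk1]
          exact sub_pos.2 (Real.exp_lt_exp.2 (mul_lt_mul_of_pos_left h00_01 hMpos))
        · rw [if_neg hk1]
          have hkF : k ∈ F := by
            simp [hF]; omega
          exact sub_pos.2 (Real.exp_lt_exp.2 (mul_lt_mul_of_pos_left (hxk k hkF) hMpos))
    · intro i j hij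
      have hfac : ∀ m : Fin (2 ^ n), ∀ k ∈ F,
          ((if (k : ℕ) = 0 ∨ (k : ℕ) = 1 then Real.exp (M * y00) / 2
            else Real.exp (M * x k false)) +
           (if σ m k then
              (if (k : ℕ) = 0 then Real.exp (M * y10) - Real.exp (M * y00)
               else if (k : ℕ) = 1 then Real.exp (M * y01) - Real.exp (M * y00)
               else Real.exp (M * x k true) - Real.exp (M * x k false))
            else 0))
          = Real.exp (M * x k (σ m k)) := by
        intro m k hk
        have hk2 : 2 ≤ (k : ℕ) := by simpa [hF] using hk
        have hk0 : ¬ ((k : ℕ) = 0) := by omega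
        have hk1 : ¬ ((k : ℕ) = 1) := by omega
        simp only [hk0, hk1, if_false, or_self]
        cases hb : σ m k <;> simp [hb] <;> ring
      have hval : ∀ m : Fin (2 ^ n),
          ((if ((i0 : ℕ) = 0 ∨ (i0 : ℕ) = 1) then Real.exp (M * y00) / 2
              else Real.exp (M * x i0 false)) +
            (if σ m i0 then
              (if (i0 : ℕ) = 0 then Real.exp (M * y10) - Real.exp (M * y00)
               else if (i0 : ℕ) = 1 then Real.exp (M * y01) - Real.exp (M * y00)
               else Real.exp (M * x i0 true) - Real.exp (M * x i0 false))
             else 0) +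
            (if ((i1 : ℕ) = 0 ∨ (i1 : ℕ) = 1) then Real.exp (M * y00) / 2
              else Real.exp (M * x i1 false)) +
            (if σ m i1 then
              (if (i1 : ℕ) = 0 then Real.exp (M * y10) - Real.exp (M * y00)
               else if (i1 : ℕ) = 1 then Real.exp (M * y01) - Real.exp (M * y00)
               else Real.exp (M * x i1 true) - Real.exp (M * x i1 false))
             else 0)) *
          ∏ k ∈ F,
            ((if ((k : ℕ) = 0 ∨ (k : ℕ) = 1) then Real.exp (M * y00) / 2
              else Real.exp (M * x k false)) +
             (if σ m k then
                (if (k : ℕ) = 0 then Real.exp (M * y10) - Real.exp (M * y00)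
                 else if (k : ℕ) = 1 then Real.exp (M * y01) - Real.exp (M * y00)
                 else Real.exp (M * x k true) - Real.exp (M * x k false))
              else 0))
          = Real.exp (M * (x1 (σ m i0) (σ m i1) + ∑ k ∈ F, x k (σ m k))) := by
        intro m
        have hfirst :
            ((if ((i0 : ℕ) = 0 ∨ (i0 : ℕ) = 1) then Real.exp (M * y00) / 2
                else Real.exp (M * x i0 false)) +
              (if σ m i0 then
                (if (i0 : ℕ) = 0 then Real.exp (M * y10) - Real.exp (M * y00)
                 else if (i0 : ℕ) = 1 then Real.exp (M * y01) - Real.exp (M * y00)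
                 else Real.exp (M * x i0 true) - Real.exp (M * x i0 false))
               else 0) +
              (if ((i1 : ℕ) = 0 ∨ (i1 : ℕ) = 1) then Real.exp (M * y00) / 2
                else Real.exp (M * x i1 false)) +
              (if σ m i1 then
                (if (i1 : ℕ) = 0 then Real.exp (M * y10) - Real.exp (M * y00)
                 else if (i1 : ℕ) = 1 then Real.exp (M * y01) - Real.exp (M * y00)
                 else Real.exp (M * x i1 true) - Real.exp (M * x i1 false))
               else 0))
            = Real.exp (M * x1 (σ m i0) (σ m i1)) := by
          have e0 : (i0 : ℕ) = 0 := rfl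
          have e1 : (i1 : ℕ) = 1 := rfl
          have hMeq : Real.exp (M * y01) + Real.exp (M * y10) - Real.exp (M * y00)
              = Real.exp (M * y11) := by
            have hz : h M = 0 := hM0
            simp only [hh] at hz
            linarith
          rw [e0, e1]
          norm_num
          cases hb0 : σ m i0 <;> cases hb1 : σ m i1 <;> simp [y00, y01, y10, y11] at hMeq ⊢ <;> linarith
        rw [Finset.prod_congr rfl (hfac m), hfirst, ← Real.exp_sum, ← Real.exp_add,
          mul_add, Finset.mul_sum]
      have h1 := hval i
      have h2 := hval j
      simp only [] at h1 h2 ⊢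
      rw [h1, h2]
      exact Real.exp_lt_exp.2 (mul_lt_mul_of_pos_left (hmono hij) hMpos)
end

section
/- Fix real numbers x_0, x_1, x_2, x_3 with x_0 < x_1 ≤ x_2 < x_3 and define g : ℝ → ℝ by g(t) = exp(t·x_0) − exp(t·x_1) − exp(t·x_2) + exp(t·x_3). Then g has a positive root (there exists t > 0 with g(t) = 0) if and only if g'(0) < 0, i.e., if and only if x_0 − x_1 − x_2 + x_3 < 0. -/
/-- for `x_0 < x_1 ≤ x_2 < x_3`, the function
`g(t) = e^{t x_0} − e^{t x_1} − e^{t x_2} + e^{t x_3}` has a positive root iff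
`g'(0) = x_0 − x_1 − x_2 + x_3 < 0`. -/
theorem exp_combination_pos_root_iff (x0 x1 x2 x3 : ℝ)
    (h01 : x0 < x1) (h12 : x1 ≤ x2) (h23 : x2 < x3) :
    (∃ t : ℝ, 0 < t ∧
      Real.exp (t * x0) - Real.exp (t * x1) - Real.exp (t * x2) + Real.exp (t * x3) = 0)
      ↔ x0 - x1 - x2 + x3 < 0 := by
  set g : ℝ → ℝ := fun t =>
    Real.exp (t * x0) - Real.exp (t * x1) - Real.exp (t * x2) + Real.exp (t * x3) with hg
  have hcont : Continuous g := by fun_prop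
  constructor
  · rintro ⟨t, ht, hroot⟩
    by_contra h
    push_neg at h
    have A : Real.exp (t * x3) = Real.exp (t * x2) * Real.exp (t * (x3 - x2)) := by
      rw [← Real.exp_add]; ring_nf
    have B : Real.exp (t * x1) = Real.exp (t * x0) * Real.exp (t * (x1 - x0)) := by
      rw [← Real.exp_add]; ring_nf
    have C : Real.exp (t * (x1 - x0)) ≤ Real.exp (t * (x3 - x2)) := by
      apply Real.exp_le_exp.mpr
      nlinarith
    have D : Real.exp (t * x0) < Real.exp (t * x2) := by
      apply Real.exp_lt_exp.mpr
      nlinarith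
    have E : 1 < Real.exp (t * (x1 - x0)) := by
      rw [show (1:ℝ) = Real.exp 0 by simp]
      apply Real.exp_lt_exp.mpr
      nlinarith
    nlinarith [Real.exp_pos (t * x0), Real.exp_pos (t * x2)]
  · intro h
    -- derivative of g at 0 is x0 - x1 - x2 + x3 < 0, so g is negative just right of 0
    have hd : ∀ y : ℝ, HasDerivAt (fun t => Real.exp (t * y)) y 0 := by
      intro y
      have := (Real.hasDerivAt_exp (0 * y)).comp 0 ((hasDerivAt_id 0).mul_const y)
      simpa [Function.comp_def] using this
    have hs : HasDerivAt g (x0 - x1 - x2 + x3) 0 := by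
      have := (((hd x0).sub (hd x1)).sub (hd x2)).add (hd x3)
      exact this
    have g0 : g 0 = 0 := by simp [hg]
    rw [hasDerivAt_iff_tendsto_slope] at hs
    have hev : ∀ᶠ u in nhdsWithin 0 {(0:ℝ)}ᶜ, slope g 0 u < 0 :=
      hs.eventually_lt_const h
    have hmono : nhdsWithin (0:ℝ) (Set.Ioi 0) ≤ nhdsWithin 0 {(0:ℝ)}ᶜ :=
      nhdsWithin_mono 0 (fun x hx => ne_of_gt hx)
    obtain ⟨t, hslope, ht⟩ := ((hev.filter_mono hmono).and self_mem_nhdsWithin).exists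
    have ht : (0:ℝ) < t := ht
    have hgt : g t < 0 := by
      rw [slope_def_field, g0] at hslope
      rcases div_neg_iff.mp (by simpa using hslope : g t / t < 0) with ⟨_, h2⟩ | ⟨h1, _⟩
      · linarith
      · linarith
    -- large T: g T > 0
    set T : ℝ := max t (Real.log 2 / (x3 - x2)) + 1 with hT
    have hTt : t < T := lt_of_le_of_lt (le_max_left _ _) (lt_add_one _)
    have hT0 : 0 < T := lt_trans ht hTt
    have hT2 : Real.log 2 / (x3 - x2) < T :=
      lt_of_le_of_lt (le_max_right _ _) (lt_add_one _)
    have hlog : Real.log 2 < T * (x3 - x2) := by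
      rw [div_lt_iff₀ (by linarith)] at hT2
      linarith
    have hexp2 : 2 < Real.exp (T * (x3 - x2)) := by
      have := Real.exp_lt_exp.mpr hlog
      rwa [Real.exp_log (by norm_num)] at this
    have hA : Real.exp (T * x3) = Real.exp (T * x2) * Real.exp (T * (x3 - x2)) := by
      rw [← Real.exp_add]; ring_nf
    have h12' : Real.exp (T * x1) ≤ Real.exp (T * x2) :=
      Real.exp_le_exp.mpr (by nlinarith)
    have hgT : 0 < g T := by
      simp only [hg]
      nlinarith [Real.exp_pos (T * x0), Real.exp_pos (T * x2)]
    obtain ⟨c, hc, hgc⟩ := intermediate_value_Icc hTt.le (hcont.continuousOn)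
      (Set.mem_Icc.mpr ⟨hgt.le, hgT.le⟩)
    exact ⟨c, lt_of_lt_of_le ht hc.1, hgc⟩
end
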